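/- Let M = 2, J_L = diag(2,1), J_R = ((0,−2),(1,0)). For any word a₀⋯a_{n−1} ∈ {L,R}^n containing at least one R, every eigenvalue λ ∈ ℂ of the product P = J_{a_{n−1}} ⋯ J_{a_0} satisfies |λ| > 1. -/

import Mathlib

open Matrix

private def fJ (b : Bool) : Matrix (Fin 2) (Fin 2) ℝ :=
  if b then !![(0 : ℝ), -2; 1, 0] else !![(2 : ℝ), 0; 0, 1]

private def NoR (M : Matrix (Fin 2) (Fin 2) ℝ) : Prop :=
  ∃ p : ℝ, 1 ≤ p ∧ M = !![p, 0; 0, 1]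

private def Good (M : Matrix (Fin 2) (Fin 2) ℝ) : Prop :=
  (∃ p q : ℝ, 2 ≤ p ∧ 2 ≤ q ∧ (M = !![p, 0; 0, q] ∨ M = !![-p, 0; 0, -q])) ∨
  (∃ p q : ℝ, 2 ≤ p ∧ 1 ≤ q ∧ (M = !![0, -p; q, 0] ∨ M = !![0, p; -q, 0]))

private lemma noR_step_false {M : Matrix (Fin 2) (Fin 2) ℝ} (h : NoR M) :
    NoR (M * fJ false) := by
  obtain ⟨p, hp, rfl⟩ := h
  exact ⟨2 * p, by linarith, by simp [fJ, Matrix.mul_fin_two]; ring_nf⟩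

private lemma noR_step_true {M : Matrix (Fin 2) (Fin 2) ℝ} (h : NoR M) :
    Good (M * fJ true) := by
  obtain ⟨p, hp, rfl⟩ := h
  refine Or.inr ⟨2 * p, 1, by linarith, le_refl 1, Or.inl ?_⟩
  simp [fJ, Matrix.mul_fin_two]; ring_nf

private lemma good_step {M : Matrix (Fin 2) (Fin 2) ℝ} (b : Bool) (h : Good M) :
    Good (M * fJ b) := by
  rcases h with ⟨p, q, hp, hq, hM | hM⟩ | ⟨p, q, hp, hq, hM | hM⟩ <;> subst hM <;> cases b
  · exact Or.inl ⟨2 * p, q, by linarith, hq, Or.inl (by simp [fJ, Matrix.mul_fin_two]; ring_nf)⟩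
  · exact Or.inr ⟨2 * p, q, by linarith, by linarith, Or.inl (by simp [fJ, Matrix.mul_fin_two]; ring_nf)⟩
  · exact Or.inl ⟨2 * p, q, by linarith, hq, Or.inr (by simp [fJ, Matrix.mul_fin_two]; ring_nf)⟩
  · exact Or.inr ⟨2 * p, q, by linarith, by linarith, Or.inr (by simp [fJ, Matrix.mul_fin_two]; ring_nf)⟩
  · exact Or.inr ⟨p, 2 * q, hp, by linarith, Or.inl (by simp [fJ, Matrix.mul_fin_two]; ring_nf)⟩
  · exact Or.inl ⟨p, 2 * q, hp, by linarith, Or.inr (by simp [fJ, Matrix.mul_fin_two]; ring_nf)⟩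
  · exact Or.inr ⟨p, 2 * q, hp, by linarith, Or.inr (by simp [fJ, Matrix.mul_fin_two]; ring_nf)⟩
  · exact Or.inl ⟨p, 2 * q, hp, by linarith, Or.inl (by simp [fJ, Matrix.mul_fin_two]; ring_nf)⟩

private lemma list_inv (l : List Bool) :
    (true ∈ l → Good ((l.map fJ).reverse.prod)) ∧
    (true ∉ l → NoR ((l.map fJ).reverse.prod)) := by
  induction l with
  | nil =>
      refine ⟨fun h => absurd h (by simp), fun _ => ⟨1, le_refl 1, ?_⟩⟩
      simp [Matrix.one_fin_two]
  | cons b t ih =>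
      have hprod : ((b :: t).map fJ).reverse.prod = (t.map fJ).reverse.prod * fJ b := by
        simp
      constructor
      · intro h
        rw [hprod]
        rcases List.mem_cons.mp h with hb | hmem
        · cases b
          · simp at hb
          · by_cases hmem : true ∈ t
            · exact good_step true (ih.1 hmem)
            · exact noR_step_true (ih.2 hmem)
        · exact good_step b (ih.1 hmem)
      · intro h
        rw [hprod]
        have hb : b = false := by
          cases b
          · rfl
          · exact absurd List.mem_cons_self h
        subst hb
        exact noR_step_false (ih.2 (fun hmem => h (List.mem_cons_of_mem _ hmem)))

private lemma map_fin_two (a b c d : ℝ) :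
    (!![a, b; c, d]).map (Complex.ofReal) =
      !![(a : ℂ), b; c, d] := by
  ext i j
  fin_cases i <;> fin_cases j <;> simp [Matrix.map_apply]

private lemma det_zero_of_mem_spectrum {A : Matrix (Fin 2) (Fin 2) ℂ} {lam : ℂ}
    (h : lam ∈ spectrum ℂ A) :
    (algebraMap ℂ (Matrix (Fin 2) (Fin 2) ℂ) lam - A).det = 0 := by
  have h1 := spectrum.mem_iff.mp h
  by_contra hd
  exact h1 ((Matrix.isUnit_iff_isUnit_det _).mpr (isUnit_iff_ne_zero.mpr hd))

private lemma algebraMap_fin_two (lam : ℂ) :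
    algebraMap ℂ (Matrix (Fin 2) (Fin 2) ℂ) lam = !![lam, 0; 0, lam] := by
  rw [Matrix.algebraMap_eq_diagonal]
  ext i j
  fin_cases i <;> fin_cases j <;> simp [Matrix.diagonal]

private lemma spec_diag (x y : ℝ) {lam : ℂ}
    (h : lam ∈ spectrum ℂ ((!![x, 0; 0, y]).map Complex.ofReal)) :
    lam = (x : ℂ) ∨ lam = (y : ℂ) := by
  have hdet := det_zero_of_mem_spectrum h
  rw [map_fin_two, algebraMap_fin_two] at hdet
  push_cast at hdet
  have hE : (!![lam, 0; 0, lam] - !![(x : ℂ), 0; 0, (y : ℂ)]) = !![lam - x, 0; 0, lam - y] := by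
    ext i j; fin_cases i <;> fin_cases j <;> simp
  rw [hE, Matrix.det_fin_two_of] at hdet
  have h0 : (lam - x) * (lam - y) = 0 := by linear_combination hdet
  rcases mul_eq_zero.mp h0 with h1 | h1
  · left; linear_combination h1
  · right; linear_combination h1

private lemma spec_anti (x y : ℝ) {lam : ℂ}
    (h : lam ∈ spectrum ℂ ((!![0, -x; y, 0]).map Complex.ofReal)) :
    lam ^ 2 = -((x : ℂ) * (y : ℂ)) := by
  have hdet := det_zero_of_mem_spectrum h
  rw [map_fin_two, algebraMap_fin_two] at hdet
  push_cast at hdet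
  have hE : (!![lam, 0; 0, lam] - !![(0 : ℂ), -(x : ℂ); (y : ℂ), 0]) =
      !![lam, (x : ℂ); -(y : ℂ), lam] := by
    ext i j; fin_cases i <;> fin_cases j <;> simp
  rw [hE, Matrix.det_fin_two_of] at hdet
  linear_combination hdet

private lemma abs_gt_one_of_sq {lam : ℂ} {x y : ℝ} (h2 : lam ^ 2 = -((x : ℂ) * (y : ℂ)))
    (hxy : 2 ≤ x * y) : 1 < ‖lam‖ := by
  have habs : ‖lam‖ ^ 2 = x * y := by
    have : ‖lam‖ ^ 2 = ‖lam ^ 2‖ := (norm_pow _ _).symm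
    rw [this, h2]
    have : -((x : ℂ) * (y : ℂ)) = ((-(x * y) : ℝ) : ℂ) := by push_cast; ring
    rw [this, Complex.norm_real, Real.norm_eq_abs, abs_neg, abs_of_nonneg (by nlinarith)]
  nlinarith [norm_nonneg lam]

private lemma spec_good {M : Matrix (Fin 2) (Fin 2) ℝ} (h : Good M) :
    ∀ lam ∈ spectrum ℂ (M.map Complex.ofReal), 1 < ‖lam‖ := by
  intro lam hlam
  rcases h with ⟨p, q, hp, hq, hM | hM⟩ | ⟨p, q, hp, hq, hM | hM⟩ <;> subst hM
  · rcases spec_diag p q hlam with h1 | h1 <;>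
      · rw [h1, Complex.norm_real, Real.norm_eq_abs, abs_of_nonneg (by linarith)]; linarith
  · rcases spec_diag (-p) (-q) hlam with h1 | h1 <;>
      · rw [h1, Complex.norm_real, Real.norm_eq_abs, abs_neg, abs_of_nonneg (by linarith)]; linarith
  · exact abs_gt_one_of_sq (spec_anti p q hlam) (by nlinarith)
  · have hlam' : lam ∈ spectrum ℂ ((!![0, -(-p); (-q), 0]).map Complex.ofReal) := by
      rw [neg_neg]; exact hlam
    exact abs_gt_one_of_sq (spec_anti (-p) (-q) hlam') (by nlinarith)

theorem product_eigenvalues_repelling (n : ℕ) (a : Fin n → Bool)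
    (ht : ∃ k, a k = true) :
    ∀ lam ∈ spectrum ℂ
        (((List.ofFn fun k : Fin n =>
            if a k then !![(0 : ℝ), -2; 1, 0] else !![(2 : ℝ), 0; 0, 1]).reverse.prod).map
          Complex.ofReal),
      1 < ‖lam‖ := by
  have hl : (List.ofFn fun k : Fin n =>
      if a k then !![(0 : ℝ), -2; 1, 0] else !![(2 : ℝ), 0; 0, 1]) =
      (List.ofFn a).map fJ := by
    rw [List.map_ofFn]
    congr 1
  rw [hl]
  obtain ⟨k, hk⟩ := ht
  have hmem : true ∈ List.ofFn a := by
    rw [List.mem_ofFn]; exact ⟨k, hk⟩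
  exact spec_good ((list_inv (List.ofFn a)).1 hmem)
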